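/- Let c₁, c₂, c₃ ∈ ℝ and define μ₁ = (-ε₁c₁ + ε₂c₂ + ε₃c₃)/2, μ₂ = (ε₁c₁ - ε₂c₂ + ε₃c₃)/2, μ₃ = (ε₁c₁ + ε₂c₂ - ε₃c₃)/2, where ε₁, ε₂, ε₃ ∈ {-1, 1}. Then μ₁μ₂ = μ₂μ₃ = μ₃μ₁ if and only if either ε₁c₁ = ε₂c₂ = ε₃c₃, or two of the μᵢ vanish (equivalently, up to relabeling indices, ε₁c₁ = ε₂c₂ and c₃ = 0). -/
import Mathlib


/-- products of the μᵢ all coincide iff either ε₁c₁ = ε₂c₂ = ε₃c₃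
or two of the μᵢ vanish. -/
theorem stmt0 (e1 e2 e3 c1 c2 c3 μ1 μ2 μ3 : ℝ)
    (he1 : e1 = 1 ∨ e1 = -1) (he2 : e2 = 1 ∨ e2 = -1) (he3 : e3 = 1 ∨ e3 = -1)
    (hμ1 : μ1 = (-(e1 * c1) + e2 * c2 + e3 * c3) / 2)
    (hμ2 : μ2 = (e1 * c1 - e2 * c2 + e3 * c3) / 2)
    (hμ3 : μ3 = (e1 * c1 + e2 * c2 - e3 * c3) / 2) :
    (μ1 * μ2 = μ2 * μ3 ∧ μ2 * μ3 = μ3 * μ1) ↔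
      ((e1 * c1 = e2 * c2 ∧ e2 * c2 = e3 * c3) ∨
        (μ1 = 0 ∧ μ2 = 0) ∨ (μ2 = 0 ∧ μ3 = 0) ∨ (μ1 = 0 ∧ μ3 = 0)) := by
  constructor
  · rintro ⟨h1, h2⟩
    have k1 : μ2 * (e3 * c3 - e1 * c1) = 0 := by
      subst hμ1 hμ2 hμ3; ring_nf; ring_nf at h1; linarith
    have k2 : μ3 * (e1 * c1 - e2 * c2) = 0 := by
      subst hμ1 hμ2 hμ3; ring_nf; ring_nf at h2; linarith
    rcases mul_eq_zero.mp k1 with h2z | hca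
    · rcases mul_eq_zero.mp k2 with h3z | hab
      · exact Or.inr (Or.inr (Or.inl ⟨h2z, h3z⟩))
      · have hab' : e1 * c1 = e2 * c2 := by linarith
        have hc : e3 * c3 = 0 := by
          rw [hμ2] at h2z; linarith
        have h1z : μ1 = 0 := by rw [hμ1]; linarith
        exact Or.inr (Or.inl ⟨h1z, h2z⟩)
    · have hca' : e1 * c1 = e3 * c3 := by linarith
      rcases mul_eq_zero.mp k2 with h3z | hab
      · have hb : e2 * c2 = 0 := by
          rw [hμ3] at h3z; linarith
        have h1z : μ1 = 0 := by rw [hμ1]; linarith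
        exact Or.inr (Or.inr (Or.inr ⟨h1z, h3z⟩))
      · have hab' : e1 * c1 = e2 * c2 := by linarith
        exact Or.inl ⟨by linarith, by linarith⟩
  · subst hμ1 hμ2 hμ3
    rintro (⟨h1, h2⟩ | ⟨h1, h2⟩ | ⟨h1, h2⟩ | ⟨h1, h2⟩)
    · constructor
      · linear_combination (-(e1*c1 - e2*c2 + e3*c3)/2) * h1 +
          (-(e1*c1 - e2*c2 + e3*c3)/2) * h2
      · linear_combination ((e1*c1 + e2*c2 - e3*c3)/2) * h1
    · constructor
      · linear_combination (e3*c3 - e1*c1) * h2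
      · linear_combination ((e1*c1 + e2*c2 - e3*c3)/2) * h2 -
          ((e1*c1 + e2*c2 - e3*c3)/2) * h1
    · constructor
      · linear_combination ((-(e1*c1) + e2*c2 + e3*c3)/2 - (e1*c1 + e2*c2 - e3*c3)/2) * h1
      · linear_combination ((e1*c1 - e2*c2 + e3*c3)/2 - (-(e1*c1) + e2*c2 + e3*c3)/2) * h2
    · constructor
      · linear_combination ((e1*c1 - e2*c2 + e3*c3)/2) * h1 -
          ((e1*c1 - e2*c2 + e3*c3)/2) * h2
      · linear_combination ((e1*c1 - e2*c2 + e3*c3)/2 - (-(e1*c1) + e2*c2 + e3*c3)/2) * h2
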